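/- If a mapping f : E → F is almost p-summing at a ∈ E, then f is continuous at a. -/

import Mathlib

open MeasureTheory Filter Finset

/-- The weak ℓ_q norm of a finite family: `sup_{‖φ‖≤1} (∑ |φ x_j|^q)^{1/q}`. -/
noncomputable def weakNorm {E : Type*} [NormedAddCommGroup E] [NormedSpace ℝ E]
    (q : ℝ) {k : ℕ} (x : Fin k → E) : ℝ :=
  sSup {s : ℝ | ∃ φ : E →L[ℝ] ℝ, ‖φ‖ ≤ 1 ∧ s = (∑ j, |φ (x j)| ^ q) ^ (1 / q)}

/-- The weak ℓ_q norm of a sequence. -/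
noncomputable def weakNormSeq {E : Type*} [NormedAddCommGroup E] [NormedSpace ℝ E]
    (q : ℝ) (x : ℕ → E) : ℝ :=
  sSup {s : ℝ | ∃ φ : E →L[ℝ] ℝ, ‖φ‖ ≤ 1 ∧ s = (∑' j, |φ (x j)| ^ q) ^ (1 / q)}

/-- Unconditionally q-summable sequences: weakly q-summable with weak norms of tails → 0. -/
def UncondSummable {E : Type*} [NormedAddCommGroup E] [NormedSpace ℝ E]
    (q : ℝ) (x : ℕ → E) : Prop :=
  (∀ φ : E →L[ℝ] ℝ, Summable fun j => |φ (x j)| ^ q) ∧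
    Tendsto (fun m => weakNormSeq q fun j => x (j + m)) atTop (nhds 0)

/-- The Rademacher functions on [0,1]. -/
noncomputable def rademacher (j : ℕ) (t : ℝ) : ℝ :=
  if Int.fract ((2 : ℝ) ^ j * t) < 1 / 2 then 1 else -1

/-- `(∫_0^1 ‖∑_j r_j(t) y_j‖² dt)^{1/2}` for a finite family `y` in `F`. -/
noncomputable def radNorm {F : Type*} [NormedAddCommGroup F] [NormedSpace ℝ F]
    {k : ℕ} (y : Fin k → F) : ℝ :=
  (∫ t in (0:ℝ)..1, ‖∑ j : Fin k, rademacher (j : ℕ) t • y j‖ ^ 2) ^ ((1:ℝ) / 2)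

/-- `f` is almost p-summing at `a`. -/
def AlmostSummingAt {E F : Type*} [NormedAddCommGroup E] [NormedSpace ℝ E]
    [NormedAddCommGroup F] [NormedSpace ℝ F] (p : ℝ) (f : E → F) (a : E) : Prop :=
  ∃ C > 0, ∃ ε > 0, ∃ r > 0, ∀ (k : ℕ) (x : Fin k → E), weakNorm p x < ε →
    radNorm (fun j => f (a + x j) - f a) ≤ C * weakNorm p x ^ r

/-- `f` is absolutely (p,q)-summing at `a`. -/
def AbsSummingAt {E F : Type*} [NormedAddCommGroup E] [NormedSpace ℝ E]
    [NormedAddCommGroup F] [NormedSpace ℝ F] (p q : ℝ) (f : E → F) (a : E) : Prop :=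
  ∃ M > 0, ∃ δ > 0, ∃ r > 0, ∀ (k : ℕ) (x : Fin k → E), weakNorm q x < δ →
    (∑ j, ‖f (a + x j) - f a‖ ^ p) ≤ M * weakNorm q x ^ r

lemma weakNorm_single {E : Type*} [NormedAddCommGroup E] [NormedSpace ℝ E]
    {p : ℝ} (hp : 1 ≤ p) (v : E) : weakNorm p (fun _ : Fin 1 => v) = ‖v‖ := by
  have hp0 : p ≠ 0 := by linarith
  have hterm : ∀ φ : E →L[ℝ] ℝ,
      (∑ j : Fin 1, |φ ((fun _ : Fin 1 => v) j)| ^ p) ^ (1 / p) = |φ v| := by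
    intro φ
    rw [Fin.sum_univ_one, ← Real.rpow_mul (abs_nonneg _), mul_one_div_cancel hp0,
      Real.rpow_one]
  have hset : {s : ℝ | ∃ φ : E →L[ℝ] ℝ, ‖φ‖ ≤ 1 ∧
      s = (∑ j : Fin 1, |φ ((fun _ : Fin 1 => v) j)| ^ p) ^ (1 / p)}
      = {s : ℝ | ∃ φ : E →L[ℝ] ℝ, ‖φ‖ ≤ 1 ∧ s = |φ v|} := by
    ext s
    simp only [Set.mem_setOf_eq]
    constructor
    · rintro ⟨φ, h1, rfl⟩; exact ⟨φ, h1, (hterm φ)⟩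
    · rintro ⟨φ, h1, rfl⟩; exact ⟨φ, h1, (hterm φ).symm⟩
  unfold weakNorm
  rw [hset]
  have hbdd : ∀ s ∈ {s : ℝ | ∃ φ : E →L[ℝ] ℝ, ‖φ‖ ≤ 1 ∧ s = |φ v|}, s ≤ ‖v‖ := by
    rintro s ⟨φ, h1, rfl⟩
    calc |φ v| ≤ ‖φ‖ * ‖v‖ := (φ.le_opNorm v)
    _ ≤ 1 * ‖v‖ := by gcongr
    _ = ‖v‖ := one_mul _
  have hne : (0 : ℝ) ∈ {s : ℝ | ∃ φ : E →L[ℝ] ℝ, ‖φ‖ ≤ 1 ∧ s = |φ v|} :=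
    ⟨0, by simp⟩
  apply le_antisymm
  · exact csSup_le ⟨0, hne⟩ hbdd
  · rcases eq_or_ne v 0 with rfl | hv
    · simpa using le_csSup ⟨‖(0:E)‖, hbdd⟩ hne
    · obtain ⟨g, hg1, hgv⟩ := exists_dual_vector ℝ v (norm_ne_zero_iff.mpr hv)
      exact le_csSup ⟨‖v‖, hbdd⟩ ⟨g, le_of_eq hg1, by rw [hgv]; simp [abs_of_nonneg]⟩

lemma radNorm_single {F : Type*} [NormedAddCommGroup F] [NormedSpace ℝ F]
    (w : F) : radNorm (fun _ : Fin 1 => w) = ‖w‖ := by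
  unfold radNorm
  have h1 : ∀ t : ℝ, ‖∑ j : Fin 1, rademacher (j : ℕ) t • (fun _ : Fin 1 => w) j‖ ^ 2
      = ‖w‖ ^ 2 := by
    intro t
    rw [Fin.sum_univ_one]
    have h2 : ‖rademacher ((0 : Fin 1) : ℕ) t • w‖ = ‖w‖ := by
      rw [norm_smul]
      unfold rademacher
      split <;> simp
    rw [h2]
  simp only [h1]
  rw [intervalIntegral.integral_const]
  simp only [sub_zero, one_smul]
  rw [← Real.rpow_natCast ‖w‖ 2, ← Real.rpow_mul (norm_nonneg _)]
  norm_num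


theorem stmt4 {E F : Type*} [NormedAddCommGroup E] [NormedSpace ℝ E]
    [NormedAddCommGroup F] [NormedSpace ℝ F]
    (p : ℝ) (hp : 1 ≤ p) (f : E → F) (a : E) (hf : AlmostSummingAt p f a) :
    ContinuousAt f a := by
  obtain ⟨C, hC, ε, hε, r, hr, H⟩ := hf
  have key : ∀ h : E, ‖h‖ < ε → ‖f (a + h) - f a‖ ≤ C * ‖h‖ ^ r := by
    intro h hh
    have := H 1 (fun _ => h) (by rw [weakNorm_single hp]; exact hh)
    rwa [weakNorm_single hp, show (fun j : Fin 1 => f (a + (fun _ : Fin 1 => h) j) - f a)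
      = fun _ : Fin 1 => f (a + h) - f a from rfl, radNorm_single] at this
  have h0 : Tendsto (fun x : E => C * ‖x - a‖ ^ r) (nhds a) (nhds 0) := by
    have h1 : Tendsto (fun x : E => ‖x - a‖) (nhds a) (nhds 0) :=
      tendsto_norm_sub_self a
    have h3 : Tendsto (fun x : E => ‖x - a‖ ^ r) (nhds a) (nhds 0) := by
      have := (continuous_pow r).continuousAt.tendsto.comp h1
      rwa [zero_pow (Nat.pos_iff_ne_zero.mp hr)] at this
    have := h3.const_mul C
    simpa using this
  have heve : ∀ᶠ x in nhds a, ‖f x - f a‖ ≤ C * ‖x - a‖ ^ r := by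
    filter_upwards [Metric.ball_mem_nhds a hε] with x hx
    have : ‖x - a‖ < ε := by rwa [Metric.mem_ball, dist_eq_norm] at hx
    simpa using key (x - a) this
  have : Tendsto (fun x => f x - f a) (nhds a) (nhds 0) :=
    squeeze_zero_norm' heve h0
  have := this.add_const (f a)
  simpa [ContinuousAt] using this
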